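/- Let α ∈ (0,2) and H ∈ (1/2,1), set γ = 1 − H − 1/α, define r(s) = ((1 − exp(−is))/(is)) · |s|^γ for s ≠ 0, g_n(x) = (1 − exp(inx))/(1 − exp(ix)) for x ∉ 2πℤ, and h_n(s,u) = n^{1−2H} · g_n(s−u) · r(s) · conj(r(u)) for u < s (and 0 for u ≥ s). Then for every a ∈ (0,1) there exists a constant C > 0 such that for all n ≥ 1 and all (s,u) with u < s, s, u ≠ 0 and s − u ∉ 2πℤ: ‖h_n(s,u)‖ ≤ C · n^{2−2H−a} · |s·u|^{γ−1} · dist(s − u, 2πℤ)^{−a}. -/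

import Mathlib

open Set


lemma norm_one_sub_expI (t : ℝ) :
    ‖1 - Complex.exp (Complex.I * t)‖ = 2 * |Real.sin (t / 2)| := by
  rw [mul_comm, Complex.exp_mul_I, ← Complex.ofReal_sin, ← Complex.ofReal_cos]
  have h1 : ((1 : ℂ) - ((Real.cos t : ℂ) + (Real.sin t : ℂ) * Complex.I)) =
      Complex.mk (1 - Real.cos t) (-Real.sin t) := by
    apply Complex.ext <;>
      simp [Complex.cos_ofReal_re, Complex.sin_ofReal_re]
  rw [h1, Complex.norm_def, Complex.normSq_mk]
  have hcos : 1 - Real.cos t = 2 * Real.sin (t / 2) ^ 2 := by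
    have h := Real.sin_sq_eq_half_sub (t / 2)
    have h2 : 2 * (t / 2) = t := by ring
    rw [h2] at h
    linarith
  have key : (1 - Real.cos t) * (1 - Real.cos t) + -Real.sin t * -Real.sin t =
      (2 * |Real.sin (t / 2)|) ^ 2 := by
    have hs : Real.sin t ^ 2 = 1 - Real.cos t ^ 2 := by
      nlinarith [Real.sin_sq_add_cos_sq t]
    rw [mul_pow, _root_.sq_abs]
    nlinarith
  rw [key, Real.sqrt_sq (by positivity)]

lemma lattice_dist (x : ℝ) (hx : ∀ m : ℤ, x ≠ 2 * Real.pi * m) :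
    0 < Metric.infDist x (Set.range fun m : ℤ => 2 * Real.pi * (m : ℝ)) ∧
    2 / Real.pi * Metric.infDist x (Set.range fun m : ℤ => 2 * Real.pi * (m : ℝ)) ≤
      ‖1 - Complex.exp (Complex.I * x)‖ := by
  have hπ := Real.pi_pos
  set m : ℤ := round (x / (2 * Real.pi)) with hm
  set y : ℝ := x - 2 * Real.pi * m with hy
  have hy_ne : y ≠ 0 := fun h => hx m (by linarith [sub_eq_zero.mp h])
  have hy_eq : y = 2 * Real.pi * (x / (2 * Real.pi) - m) := by
    field_simp
    exact hy
  have hy_le : |y| ≤ Real.pi := by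
    rw [hy_eq, abs_mul, abs_of_pos (by linarith : (0:ℝ) < 2 * Real.pi)]
    have := abs_sub_round (x / (2 * Real.pi))
    nlinarith
  set S := Set.range fun m : ℤ => 2 * Real.pi * (m : ℝ) with hS
  have hd_le : Metric.infDist x S ≤ |y| := by
    have : dist x (2 * Real.pi * (m : ℝ)) = |y| := by
      rw [Real.dist_eq]
    rw [← this]
    exact Metric.infDist_le_dist_of_mem ⟨m, rfl⟩
  have hd_ge : |y| ≤ Metric.infDist x S := by
    have hne : S.Nonempty := ⟨2 * Real.pi * (m : ℝ), m, rfl⟩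
    have h0 : ∀ z ∈ S, |y| ≤ dist x z := by
      rintro z ⟨m', rfl⟩
      rw [Real.dist_eq]
      rcases eq_or_ne m' m with rfl | hne'
      · exact le_rfl
      · have h1 : x - 2 * Real.pi * m' = y + 2 * Real.pi * ((m : ℝ) - m') := by
          rw [hy]; ring
        have h2 : (1 : ℝ) ≤ |(m : ℝ) - (m' : ℝ)| := by
          rw [← Int.cast_sub, ← Int.cast_abs]
          exact_mod_cast Int.one_le_abs (sub_ne_zero.mpr (Ne.symm hne'))
        have h3 : 2 * Real.pi ≤ |2 * Real.pi * ((m : ℝ) - m')| := by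
          rw [abs_mul, abs_of_pos (by linarith : (0:ℝ) < 2 * Real.pi)]
          nlinarith
        rw [h1]
        have h5 := abs_add_le (-y) (y + 2 * Real.pi * ((m : ℝ) - m'))
        rw [abs_neg] at h5
        have h6 : -y + (y + 2 * Real.pi * ((m : ℝ) - m')) =
            2 * Real.pi * ((m : ℝ) - m') := by ring
        rw [h6] at h5
        linarith
    have hofReal : ENNReal.ofReal |y| ≤ Metric.infEDist x S := by
      rw [Metric.le_infEDist]
      intro z hz
      rw [edist_dist]
      exact ENNReal.ofReal_le_ofReal (h0 z hz)
    calc |y| = (ENNReal.ofReal |y|).toReal := (ENNReal.toReal_ofReal (abs_nonneg y)).symm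
      _ ≤ Metric.infDist x S := ENNReal.toReal_mono (Metric.infEdist_ne_top hne) hofReal
  have hd : Metric.infDist x S = |y| := le_antisymm hd_le hd_ge
  have hd_pos : 0 < Metric.infDist x S := by
    rw [hd]; exact abs_pos.mpr hy_ne
  refine ⟨hd_pos, ?_⟩
  rw [norm_one_sub_expI, hd]
  have hxy : x / 2 = y / 2 + (m : ℤ) * Real.pi := by rw [hy]; push_cast; ring
  have habs : |Real.sin (x / 2)| = |Real.sin (y / 2)| := by
    rw [hxy, Real.sin_add_int_mul_pi, abs_mul]
    have : |((-1 : ℝ)) ^ m| = 1 := by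
      rcases Int.even_or_odd m with he | ho
      · rw [he.neg_one_zpow]; simp
      · rw [Odd.neg_one_zpow ho]; simp
    rw [this, one_mul]
  have hsin_abs : |Real.sin (y / 2)| = Real.sin (|y| / 2) := by
    rcases abs_cases y with ⟨h, h0⟩ | ⟨h, h0⟩
    · rw [h]
      exact abs_of_nonneg (Real.sin_nonneg_of_nonneg_of_le_pi (by linarith) (by linarith))
    · have hyp : -y ≤ Real.pi := by rw [h] at hy_le; linarith
      have h' : Real.sin (y / 2) ≤ 0 := by
        have hpos : 0 ≤ Real.sin (-(y / 2)) :=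
          Real.sin_nonneg_of_nonneg_of_le_pi (by linarith) (by linarith)
        rw [Real.sin_neg] at hpos; linarith
      rw [h, show -y / 2 = -(y / 2) by ring, Real.sin_neg, abs_of_nonpos h']
  have hjordan : 2 / Real.pi * (|y| / 2) ≤ Real.sin (|y| / 2) :=
    Real.mul_le_sin (by positivity) (by linarith)
  rw [habs, hsin_abs]
  have hπ' : 2 / Real.pi * |y| = 2 * (2 / Real.pi * (|y| / 2)) := by ring
  linarith [mul_le_mul_of_nonneg_left hjordan (by norm_num : (0:ℝ) ≤ 2)]

lemma exp_I_ne_one (x : ℝ) (hx : ∀ m : ℤ, x ≠ 2 * Real.pi * m) :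
    Complex.exp (Complex.I * x) ≠ 1 := by
  intro h
  rw [Complex.exp_eq_one_iff] at h
  obtain ⟨k, hk⟩ := h
  have h2 : (x : ℂ) * Complex.I = ((2 * Real.pi * k : ℝ) : ℂ) * Complex.I := by
    rw [mul_comm (x:ℂ) Complex.I, hk]; push_cast; ring
  have h3 : (x : ℂ) = ((2 * Real.pi * k : ℝ) : ℂ) := mul_right_cancel₀ Complex.I_ne_zero h2
  exact hx k (by exact_mod_cast h3)

lemma g_le_n (n : ℕ) (x : ℝ) (hx : ∀ m : ℤ, x ≠ 2 * Real.pi * m) :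
    ‖(1 - Complex.exp (Complex.I * (n : ℂ) * x)) / (1 - Complex.exp (Complex.I * x))‖
      ≤ (n : ℝ) := by
  have hz := exp_I_ne_one x hx
  have harg : Complex.I * (n : ℂ) * x = (n : ℂ) * (Complex.I * x) := by ring
  have hpow : Complex.exp (Complex.I * (n : ℂ) * x) = Complex.exp (Complex.I * x) ^ n := by
    rw [harg, Complex.exp_nat_mul]
  have hgeom : (1 - Complex.exp (Complex.I * (n : ℂ) * x)) / (1 - Complex.exp (Complex.I * x))
      = ∑ i ∈ Finset.range n, Complex.exp (Complex.I * x) ^ i := by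
    rw [geom_sum_eq hz n, hpow, ← neg_sub (Complex.exp (Complex.I * x) ^ n) 1,
      ← neg_sub (Complex.exp (Complex.I * x)) 1, neg_div_neg_eq]
  rw [hgeom]
  calc ‖∑ i ∈ Finset.range n, Complex.exp (Complex.I * x) ^ i‖
      ≤ ∑ i ∈ Finset.range n, ‖Complex.exp (Complex.I * x) ^ i‖ := norm_sum_le _ _
    _ = ∑ i ∈ Finset.range n, (1 : ℝ) := by
        refine Finset.sum_congr rfl fun i _ => ?_
        rw [norm_pow, Complex.norm_exp]
        simp
    _ = (n : ℝ) := by simp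

lemma r_bound (γ : ℝ) (s : ℝ) (hs : s ≠ 0) :
    ‖(1 - Complex.exp (-(Complex.I * (s : ℂ)))) / (Complex.I * (s : ℂ)) * ((|s| ^ γ : ℝ) : ℂ)‖
      ≤ 2 * |s| ^ (γ - 1) := by
  have hs' : (0 : ℝ) < |s| := abs_pos.mpr hs
  have hnum : ‖1 - Complex.exp (-(Complex.I * (s : ℂ)))‖ ≤ 2 := by
    calc ‖1 - Complex.exp (-(Complex.I * (s : ℂ)))‖
        ≤ ‖(1 : ℂ)‖ + ‖Complex.exp (-(Complex.I * (s : ℂ)))‖ := norm_sub_le _ _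
      _ = 2 := by rw [norm_one, Complex.norm_exp]; simp; norm_num
  rw [norm_mul, norm_div]
  have h1 : ‖Complex.I * (s : ℂ)‖ = |s| := by simp
  have h2 : ‖((|s| ^ γ : ℝ) : ℂ)‖ = |s| ^ γ := by
    rw [Complex.norm_real, Real.norm_eq_abs, abs_of_nonneg (Real.rpow_nonneg (abs_nonneg s) γ)]
  rw [h1, h2]
  have h3 : |s| ^ (γ - 1) = |s| ^ γ / |s| := by rw [Real.rpow_sub hs', Real.rpow_one]
  calc ‖1 - Complex.exp (-(Complex.I * (s : ℂ)))‖ / |s| * |s| ^ γ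
      ≤ 2 / |s| * |s| ^ γ := by gcongr
    _ = 2 * |s| ^ (γ - 1) := by rw [h3]; ring

lemma interp {G A B a : ℝ} (hG : 0 ≤ G) (hA : 0 ≤ A) (hGA : G ≤ A) (hGB : G ≤ B)
    (ha : 0 ≤ a) (ha1 : a ≤ 1) : G ≤ A ^ a * B ^ (1 - a) := by
  have hsum : a + (1 - a) = 1 := by ring
  calc G = G ^ (a + (1 - a)) := by rw [hsum, Real.rpow_one]
    _ = G ^ a * G ^ (1 - a) := Real.rpow_add' hG (by rw [hsum]; norm_num)
    _ ≤ A ^ a * B ^ (1 - a) :=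
        mul_le_mul (Real.rpow_le_rpow hG hGA ha) (Real.rpow_le_rpow hG hGB (by linarith))
          (Real.rpow_nonneg hG _) (Real.rpow_nonneg hA a)

/-- Bound on the prelimit kernels near `2πℤ`: for `a ∈ (0,1)` there is `C > 0` with
`‖h_n(s,u)‖ ≤ C n^{2-2H-a} |s|^{γ-1} |u|^{γ-1} dist(s-u, 2πℤ)^{-a}` for `s - u ∉ 2πℤ`. -/
theorem prelimit_kernel_bound_near_lattice (α H : ℝ) (hα : α ∈ Ioo (0 : ℝ) 2)
    (hH : H ∈ Ioo (1 / 2 : ℝ) 1)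
    (γ : ℝ) (hγ : γ = 1 - H - 1 / α)
    (r : ℝ → ℂ)
    (hr : ∀ s : ℝ, s ≠ 0 → r s =
      (1 - Complex.exp (-(Complex.I * (s : ℂ)))) / (Complex.I * (s : ℂ)) * ((|s| ^ γ : ℝ) : ℂ))
    (g : ℕ → ℝ → ℂ)
    (hg : ∀ (n : ℕ) (x : ℝ), (∀ m : ℤ, x ≠ 2 * Real.pi * m) →
      g n x = (1 - Complex.exp (Complex.I * (n : ℂ) * (x : ℂ))) /
        (1 - Complex.exp (Complex.I * (x : ℂ))))
    (hn : ℕ → ℝ → ℝ → ℂ)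
    (hhn : ∀ (n : ℕ) (s u : ℝ), hn n s u = if u < s then
        (((n : ℝ) ^ (1 - 2 * H) : ℝ) : ℂ) * g n (s - u) * r s * (starRingEnd ℂ) (r u)
      else 0) :
    ∀ a : ℝ, a ∈ Ioo (0 : ℝ) 1 → ∃ C : ℝ, 0 < C ∧
      ∀ (n : ℕ) (s u : ℝ), 1 ≤ n → u < s → s ≠ 0 → u ≠ 0 →
        (∀ m : ℤ, s - u ≠ 2 * Real.pi * m) →
        ‖hn n s u‖ ≤ C * (n : ℝ) ^ (2 - 2 * H - a) * (|s| ^ (γ - 1) * |u| ^ (γ - 1)) *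
          Metric.infDist (s - u) (Set.range fun m : ℤ => 2 * Real.pi * (m : ℝ)) ^ (-a) := by
  rintro a ⟨ha0, ha1⟩
  refine ⟨4 * Real.pi ^ a, by positivity, ?_⟩
  intro n s u hn1 hus hs hu hsu
  have hπ := Real.pi_pos
  set d := Metric.infDist (s - u) (Set.range fun m : ℤ => 2 * Real.pi * (m : ℝ)) with hdd
  obtain ⟨hd_pos, hd_le⟩ := lattice_dist (s - u) hsu
  rw [← hdd] at hd_pos hd_le
  have hnpos : (0 : ℝ) < n := by exact_mod_cast Nat.lt_of_lt_of_le Nat.zero_lt_one hn1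
  -- rewrite the kernel
  rw [hhn n s u, if_pos hus, hg n (s - u) hsu, hr s hs, hr u hu]
  rw [norm_mul, norm_mul, norm_mul, RCLike.norm_conj]
  have hNnorm : ‖(((n : ℝ) ^ (1 - 2 * H) : ℝ) : ℂ)‖ = (n : ℝ) ^ (1 - 2 * H) := by
    rw [Complex.norm_real, Real.norm_eq_abs,
      abs_of_nonneg (Real.rpow_nonneg (le_of_lt hnpos) _)]
  rw [hNnorm]
  -- bounds on the three factors
  have hRs := r_bound γ s hs
  have hRu := r_bound γ u hu
  -- bound on g: interpolation
  have hGnum : ‖1 - Complex.exp (Complex.I * (n : ℂ) * ((s - u : ℝ) : ℂ))‖ ≤ 2 := by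
    calc ‖1 - Complex.exp (Complex.I * (n : ℂ) * ((s - u : ℝ) : ℂ))‖
        ≤ ‖(1 : ℂ)‖ + ‖Complex.exp (Complex.I * (n : ℂ) * ((s - u : ℝ) : ℂ))‖ := norm_sub_le _ _
      _ = 2 := by rw [norm_one, Complex.norm_exp]; simp; norm_num
  have hG2 : ‖(1 - Complex.exp (Complex.I * (n : ℂ) * ((s - u : ℝ) : ℂ))) /
      (1 - Complex.exp (Complex.I * ((s - u : ℝ) : ℂ)))‖ ≤ Real.pi / d := by
    rw [norm_div]
    have hden : 2 / Real.pi * d ≤ ‖1 - Complex.exp (Complex.I * ((s - u : ℝ) : ℂ))‖ := hd_le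
    have hd2 : (0 : ℝ) < 2 / Real.pi * d := by positivity
    calc ‖1 - Complex.exp (Complex.I * (n : ℂ) * ((s - u : ℝ) : ℂ))‖ /
          ‖1 - Complex.exp (Complex.I * ((s - u : ℝ) : ℂ))‖
        ≤ 2 / (2 / Real.pi * d) := by
          apply div_le_div₀ (by norm_num) hGnum hd2 hden
      _ = Real.pi / d := by field_simp
  have hG1 := g_le_n n (s - u) hsu
  have hGint : ‖(1 - Complex.exp (Complex.I * (n : ℂ) * ((s - u : ℝ) : ℂ))) /
      (1 - Complex.exp (Complex.I * ((s - u : ℝ) : ℂ)))‖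
      ≤ (Real.pi / d) ^ a * (n : ℝ) ^ (1 - a) :=
    interp (norm_nonneg _) (by positivity) hG2 hG1 ha0.le ha1.le
  -- combine
  have step : (n : ℝ) ^ (1 - 2 * H) *
      ‖(1 - Complex.exp (Complex.I * (n : ℂ) * ((s - u : ℝ) : ℂ))) /
        (1 - Complex.exp (Complex.I * ((s - u : ℝ) : ℂ)))‖ *
      ‖(1 - Complex.exp (-(Complex.I * (s : ℂ)))) / (Complex.I * (s : ℂ)) *
        ((|s| ^ γ : ℝ) : ℂ)‖ *
      ‖(1 - Complex.exp (-(Complex.I * (u : ℂ)))) / (Complex.I * (u : ℂ)) *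
        ((|u| ^ γ : ℝ) : ℂ)‖
      ≤ (n : ℝ) ^ (1 - 2 * H) * ((Real.pi / d) ^ a * (n : ℝ) ^ (1 - a)) *
        (2 * |s| ^ (γ - 1)) * (2 * |u| ^ (γ - 1)) := by
    gcongr <;> positivity
  refine le_trans step (le_of_eq ?_)
  have e1 : (n : ℝ) ^ (2 - 2 * H - a) = (n : ℝ) ^ (1 - 2 * H) * (n : ℝ) ^ (1 - a) := by
    rw [← Real.rpow_add hnpos]; ring_nf
  have e2 : (Real.pi / d) ^ a = Real.pi ^ a * d ^ (-a) := by
    rw [Real.div_rpow Real.pi_pos.le hd_pos.le, Real.rpow_neg hd_pos.le, div_eq_mul_inv]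
  rw [e1, e2]
  ring
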